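/- Let R be a (possibly noncommutative) ring and let q₁,…,qₙ be elements of R. For every integer h with 0 ≤ h ≤ n, the continuant of the sequence (−q_h, −q_{h−1}, …, −q₁, 0, q₁, q₂, …, qₙ) equals [q_{h+2}, q_{h+3}, …, qₙ] if 0 ≤ h ≤ n−2, equals 1 if h = n−1, and equals 0 if h = n. -/

import Mathlib

/-- Auxiliary function: the continuant computed on the *reversed* sequence,
implementing the recurrence `[q₁,…,qₙ] = [q₁,…,q_{n−1}]·qₙ + [q₁,…,q_{n−2}]`
together with `[] = 1` and `[q₁] = q₁`. -/
def contAux {R : Type*} [Ring R] : List R → R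
  | [] => 1
  | [a] => a
  | a :: b :: l => contAux (b :: l) * a + contAux l

/-- The continuant `[q₁,…,qₙ]` of the finite sequence `q₁,…,qₙ`. -/
def continuant {R : Type*} [Ring R] (l : List R) : R :=
  contAux l.reverse

lemma contAux_nil {R : Type*} [Ring R] : contAux ([] : List R) = 1 := rfl
lemma contAux_single {R : Type*} [Ring R] (a : R) : contAux [a] = a := rfl
lemma contAux_cons_cons {R : Type*} [Ring R] (a b : R) (l : List R) :
    contAux (a :: b :: l) = contAux (b :: l) * a + contAux l := rfl

lemma contAux_append_singleton {R : Type*} [Ring R] :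
    ∀ (m : List R), m ≠ [] → ∀ a : R,
      contAux (m ++ [a]) = a * contAux m + contAux m.dropLast
  | [], h, _ => absurd rfl h
  | [b], _, a => by
      simp [contAux_nil, contAux_single, contAux_cons_cons]
  | [b, c], _, a => by
      simp only [List.cons_append, List.nil_append, contAux_cons_cons, contAux_single,
        contAux_nil, List.dropLast]
      noncomm_ring
  | b :: c :: d :: m', _, a => by
      have ih1 := contAux_append_singleton (c :: d :: m') (by simp) a
      have ih2 := contAux_append_singleton (d :: m') (by simp) a
      have hdl : (b :: c :: d :: m').dropLast = b :: c :: (d :: m').dropLast := by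
        simp [List.dropLast]
      have hdl2 : (c :: d :: m').dropLast = c :: (d :: m').dropLast := by
        simp [List.dropLast]
      rw [hdl2] at ih1
      have e1 : contAux ((b :: c :: d :: m') ++ [a])
          = contAux ((c :: d :: m') ++ [a]) * b + contAux ((d :: m') ++ [a]) := rfl
      rw [e1, ih1, ih2, hdl, contAux_cons_cons b c ((d :: m').dropLast),
        contAux_cons_cons b c (d :: m')]
      generalize contAux (c :: d :: m') = X
      generalize contAux (d :: m') = Y
      generalize contAux (c :: (d :: m').dropLast) = Z
      generalize contAux (d :: m').dropLast = W
      noncomm_ring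
  termination_by m => m.length

lemma continuant_cons {R : Type*} [Ring R] (a : R) (l : List R) (hl : l ≠ []) :
    continuant (a :: l) = a * continuant l + continuant l.tail := by
  have hrev : l.reverse ≠ [] := by simpa using hl
  have h2 : l.reverse.dropLast = l.tail.reverse := by
    have h3 := List.tail_reverse (l := l.reverse)
    rw [List.reverse_reverse] at h3
    rw [h3, List.reverse_reverse]
  unfold continuant
  rw [List.reverse_cons, contAux_append_singleton l.reverse hrev a, h2]

/-- In any (possibly noncommutative) ring, for `0 ≤ h ≤ n` the continuant of the
sequence `(−q_h, −q_{h−1}, …, −q₁, 0, q₁, q₂, …, qₙ)` equals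
`[q_{h+2}, q_{h+3}, …, qₙ]` if `h ≤ n−2`, equals `1` if `h = n−1`, and equals `0`
if `h = n`. -/
theorem continuant_back_to_zero {R : Type*} [Ring R] (n : ℕ) (q : Fin n → R)
    (h : ℕ) (hhn : h ≤ n) :
    (h + 2 ≤ n →
      continuant ((((List.ofFn q).take h).map (fun x => -x)).reverse ++ 0 :: List.ofFn q) =
        continuant ((List.ofFn q).drop (h + 1))) ∧
    (h + 1 = n →
      continuant ((((List.ofFn q).take h).map (fun x => -x)).reverse ++ 0 :: List.ofFn q) = 1) ∧
    (h = n →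
      continuant ((((List.ofFn q).take h).map (fun x => -x)).reverse ++ 0 :: List.ofFn q) = 0) := by
  set L : List R := List.ofFn q with hL
  have hlen : L.length = n := by simp [hL]
  -- fc k : the "extended" continuant of the tail, with fc (n+1) = 0
  set fc : ℕ → R := fun k => if k ≤ n then continuant (L.drop k) else 0 with hfc
  set rest : ℕ → List R := fun k => ((L.take k).map (fun x => -x)).reverse ++ 0 :: L
    with hrest
  have hrest_ne : ∀ k, rest k ≠ [] := by
    intro k
    simp [hrest]
  -- recurrence for fc
  have hfc_rec : ∀ k (hk : k + 1 ≤ n),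
      fc k = L[k]'(by omega) * fc (k + 1) + fc (k + 2) := by
    intro k hk
    have hkn : k < L.length := by omega
    rcases Nat.lt_or_ge (k + 2) (n + 1) with hk2 | hk2
    · -- k + 2 ≤ n
      have hdrop : L.drop k = L[k] :: L.drop (k + 1) := List.drop_eq_getElem_cons hkn
      have hne : L.drop (k + 1) ≠ [] := by
        rw [← List.length_pos_iff_ne_nil, List.length_drop]
        omega
      have htail : (L.drop (k + 1)).tail = L.drop (k + 2) := by
        rw [List.tail_drop]
      have hc := continuant_cons (L[k]) (L.drop (k + 1)) hne
      rw [htail] at hc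
      simp only [hfc]
      rw [if_pos (show k ≤ n by omega), if_pos (show k + 1 ≤ n by omega),
        if_pos (show k + 2 ≤ n by omega), hdrop, hc]
    · -- k + 1 = n
      have hdrop : L.drop k = [L[k]] := by
        have h5 : L.drop k = L[k] :: L.drop (k + 1) := List.drop_eq_getElem_cons hkn
        rw [h5, List.drop_eq_nil_of_le (by omega)]
      have h6 : continuant (L.drop (k + 1)) = 1 := by
        rw [List.drop_eq_nil_of_le (by omega)]; rfl
      simp only [hfc]
      rw [if_pos (show k ≤ n by omega), if_pos (show k + 1 ≤ n by omega),
        if_neg (show ¬ (k + 2 ≤ n) by omega), hdrop, h6, mul_one, add_zero]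
      simp [continuant, contAux_single]
  -- main invariant
  have main : ∀ k, k ≤ n →
      continuant (rest k) = fc (k + 1) ∧ continuant ((rest k).tail) = fc k := by
    intro k
    induction k with
    | zero =>
      intro _
      have hr0 : rest 0 = 0 :: L := by simp [hrest]
      constructor
      · rw [hr0]
        rcases Nat.eq_zero_or_pos n with hn | hn
        · have hLnil : L = [] := List.length_eq_zero_iff.mp (by rw [hlen, hn])
          rw [hLnil]
          simp only [hfc]
          rw [if_neg (show ¬ (0 + 1 ≤ n) by omega)]
          simp [continuant, contAux_single]
        · have hne : L ≠ [] := by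
            rw [← List.length_pos_iff_ne_nil, hlen]; omega
          rw [continuant_cons 0 L hne, zero_mul, zero_add]
          simp only [hfc]
          rw [if_pos (show 0 + 1 ≤ n by omega), List.drop_one]
      · rw [hr0, List.tail_cons]
        simp only [hfc]
        rw [if_pos (Nat.zero_le n), List.drop_zero]
    | succ k ih =>
      intro hk1
      have hk : k ≤ n := by omega
      obtain ⟨ih1, ih2⟩ := ih hk
      have hkL : k < L.length := by omega
      have hstep : rest (k + 1) = -L[k] :: rest k := by
        simp only [hrest]
        rw [← List.take_concat_get' L k hkL, List.map_append, List.reverse_append]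
        simp only [List.map_cons, List.map_nil, List.reverse_cons, List.reverse_nil,
          List.nil_append, List.singleton_append, List.cons_append]
      have hcons := continuant_cons (-L[k]) (rest k) (hrest_ne k)
      rw [← hstep] at hcons
      have hrec := hfc_rec
      constructor
      · rw [hcons, ih1, ih2, hrec k (by omega)]
        noncomm_ring
      · rw [hstep, List.tail_cons, ih1]
  obtain ⟨m1, m2⟩ := main h hhn
  refine ⟨fun h2 => ?_, fun h1 => ?_, fun h0 => ?_⟩
  · rw [m1]; simp only [hfc]; rw [if_pos (show h + 1 ≤ n by omega)]
  · rw [m1]; simp only [hfc]; rw [if_pos (show h + 1 ≤ n by omega)]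
    rw [List.drop_eq_nil_of_le (by omega)]; rfl
  · rw [m1]; simp only [hfc]; rw [if_neg (show ¬ (h + 1 ≤ n) by omega)]
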